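/- Let 0 < T ≤ 1, N ∈ ℕ with N ≥ 1, and 0 = s₀ < t₁ < s₁ < t₂ < ⋯ < s_N < t_{N+1} = T. Let h : ℝ → ℝ be continuous on [0,T], H(t) = ∫₀^t h(τ)dτ, H₀ = min_{t∈[0,T]} H(t), and let β ∈ ℝ satisfy β < 2e^{H₀}/T². Let θ₁, θ₂ ∈ (1,2) and A₁, a₂ > 0. For i = 0,…,N let f̃ᵢ : ℝ × ℝ → ℝ be continuous, set F̃ᵢ(t,v) = ∫₀^v f̃ᵢ(t,s) ds, and assume for all t ∈ (sᵢ, t_{i+1}] and v ∈ ℝ: f̃ᵢ(t,−v) = −f̃ᵢ(t,v); F̃ᵢ(t,v) ≥ 0; v·f̃ᵢ(t,v) − 2F̃ᵢ(t,v) < 0 whenever v ≠ 0; |f̃ᵢ(t,v)| ≤ A₁|v|^{θ₁−1}; and for every M > 0 there exists ρ > 0 such that F̃ᵢ(t,v) ≥ M·v² for all t ∈ (sᵢ, t_{i+1}] and 0 < |v| ≤ ρ. For i = 1,…,N let Ĩᵢ : ℝ → ℝ be continuous with Ĩᵢ(−v) = −Ĩᵢ(v), |Ĩᵢ(v)| ≤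 a₂(|v|^{θ₂−1}+1), ∫₀^v Ĩᵢ(s)ds ≥ 0, and 2∫₀^v Ĩᵢ(s)ds ≥ Ĩᵢ(v)·v for all v ∈ ℝ. Define J̃₀(u) = ½‖u‖_E² − (β/2)∫₀^T |u'(t)|² dt − ∑_{i=0}^N ∫_{sᵢ}^{t_{i+1}} e^{H(t)} F̃ᵢ(t,u(t)) dt − ∑_{i=1}^N ∫₀^{u(tᵢ)} e^{H(tᵢ)} Ĩᵢ(s) ds, where ‖u‖_E = (∫₀^T e^{H(t)}|u''(t)|² dt)^{1/2}. Then for every u ∈ E_T that does not vanish identically on ⋃_{i=0}^N (sᵢ, t_{i+1}], there exists a unique c(u) > 0 such that J̃₀(c·u) < 0 for all c with 0 < |c| < c(u) and J̃₀(c·u) ≥ 0 for all c with |c| ≥ c(u). -/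

import Mathlib

open Set MeasureTheory Real

/-- `u`, with first and second derivatives `u'`, `u''`, belongs to the space
`E = H₀²(0,T)` of twice continuously differentiable functions on `[0,T]`
vanishing together with their first derivatives at the endpoints. -/
def IsInE (T : ℝ) (u u' u'' : ℝ → ℝ) : Prop :=
  (∀ t ∈ Set.Icc (0:ℝ) T, HasDerivAt u (u' t) t) ∧
  (∀ t ∈ Set.Icc (0:ℝ) T, HasDerivAt u' (u'' t) t) ∧
  ContinuousOn u'' (Set.Icc 0 T) ∧
  u 0 = 0 ∧ u T = 0 ∧ u' 0 = 0 ∧ u' T = 0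

namespace Stmt11Aux

lemma int_mono (a b : ℝ) (hab : a ≤ b) {f g : ℝ → ℝ}
    (hf : IntervalIntegrable f volume a b) (hg : IntervalIntegrable g volume a b)
    (h : ∀ x ∈ Ioc a b, f x ≤ g x) :
    ∫ x in a..b, f x ≤ ∫ x in a..b, g x := by
  rw [intervalIntegral.integral_of_le hab, intervalIntegral.integral_of_le hab]
  exact setIntegral_mono_on hf.1 hg.1 measurableSet_Ioc h

lemma int_nonneg (a b : ℝ) (hab : a ≤ b) {f : ℝ → ℝ}
    (h : ∀ x ∈ Ioc a b, 0 ≤ f x) : 0 ≤ ∫ x in a..b, f x := by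
  rw [intervalIntegral.integral_of_le hab]
  exact setIntegral_nonneg measurableSet_Ioc h

lemma int_pos (a b : ℝ) (hab : a < b) {f : ℝ → ℝ}
    (hc : ContinuousOn f (Icc a b)) (h : ∀ x ∈ Icc a b, 0 < f x) :
    0 < ∫ x in a..b, f x := by
  obtain ⟨x₀, hx₀, hmin⟩ := isCompact_Icc.exists_isMinOn (nonempty_Icc.2 hab.le) hc
  have hint : IntervalIntegrable f volume a b := hc.intervalIntegrable_of_Icc hab.le
  calc (0:ℝ) < f x₀ * (b - a) := by
        have := h x₀ hx₀; have : 0 < b - a := by linarith [hab]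
        positivity
    _ = ∫ _x in a..b, f x₀ := by rw [intervalIntegral.integral_const]; ring_nf
    _ ≤ ∫ x in a..b, f x := int_mono a b hab.le (by simp) hint
        (fun x hx => isMinOn_iff.mp hmin x ⟨hx.1.le, hx.2⟩)

lemma prim_hasDeriv {f : ℝ → ℝ} (hf : Continuous f) (w : ℝ) :
    HasDerivAt (fun v => ∫ s in (0:ℝ)..v, f s) (f w) w :=
  intervalIntegral.integral_hasDerivAt_right (hf.intervalIntegrable _ _)
    (hf.stronglyMeasurableAtFilter _ _) hf.continuousAt

lemma prim_even {f : ℝ → ℝ} (hodd : ∀ s, f (-s) = - f s) (v : ℝ) :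
    (∫ s in (0:ℝ)..(-v), f s) = ∫ s in (0:ℝ)..v, f s := by
  have h1 : (∫ x in (-v)..(0:ℝ), f (-x)) = ∫ x in (0:ℝ)..v, f x := by
    simpa using intervalIntegral.integral_comp_neg (a := -v) (b := (0:ℝ)) f
  have h2 : (∫ x in (-v)..(0:ℝ), f (-x)) = ∫ x in (-v)..(0:ℝ), -f x := by
    congr 1; ext x; rw [hodd]
  rw [h2] at h1
  rw [intervalIntegral.integral_neg] at h1
  rw [intervalIntegral.integral_symm] at h1
  simpa using h1

lemma prim_bound {f : ℝ → ℝ} (v C : ℝ) (h : ∀ s : ℝ, |s| ≤ |v| → |f s| ≤ C) :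
    |∫ s in (0:ℝ)..v, f s| ≤ C * |v| := by
  have := intervalIntegral.norm_integral_le_of_norm_le_const (a := (0:ℝ)) (b := v) (C := C)
    (f := f) ?_
  · simpa using this
  · intro x hx
    rcases Set.mem_uIoc.mp hx with h1 | h1
    · exact h x (abs_le.mpr ⟨by linarith [abs_nonneg v, h1.1], by linarith [le_abs_self v, h1.2]⟩)
    · exact h x (abs_le.mpr ⟨by linarith [neg_abs_le v, h1.1], by linarith [abs_nonneg v, h1.2]⟩)

lemma rpow_absorb {θ : ℝ} (hθ : 1 < θ) (w : ℝ) : |w| ^ (θ - 1) * |w| = |w| ^ θ := by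
  rcases eq_or_ne w 0 with h0 | h0
  · have e1 : θ - 1 ≠ 0 := by intro hc; rw [sub_eq_zero] at hc; rw [hc] at hθ; exact lt_irrefl _ hθ
    have e2 : θ ≠ 0 := by intro hc; rw [hc] at hθ; linarith
    rw [h0, abs_zero, Real.zero_rpow e1, Real.zero_rpow e2, mul_zero]
  · have h1 : (0:ℝ) < |w| := abs_pos.mpr h0
    rw [Real.rpow_sub h1, Real.rpow_one, div_mul_cancel₀ _ (ne_of_gt h1)]

lemma uIcc_sub {a b lo hi : ℝ} (ha : a ∈ Icc lo hi) (hb : b ∈ Icc lo hi) :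
    uIcc a b ⊆ Icc lo hi := by
  intro y hy
  rcases le_total a b with hab | hab
  · rw [uIcc_of_le hab] at hy
    exact ⟨le_trans ha.1 hy.1, le_trans hy.2 hb.2⟩
  · rw [uIcc_of_ge hab] at hy
    exact ⟨le_trans hb.1 hy.1, le_trans hy.2 ha.2⟩

lemma scale_aux {f : ℝ → ℝ} (hf : Continuous f) (v : ℝ) {l : ℝ} (hl : l ≠ 0) :
    HasDerivAt (fun l : ℝ => (∫ s in (0:ℝ)..(l * v), f s) * (l ^ 2)⁻¹)
      ((l * v * f (l * v) - 2 * ∫ s in (0:ℝ)..(l * v), f s) / l ^ 3) l := by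
  have h1 : HasDerivAt (fun l : ℝ => (∫ s in (0:ℝ)..(l * v), f s)) (f (l * v) * v) l :=
    by have := (prim_hasDeriv hf (l * v)).comp l (hasDerivAt_mul_const v); exact this
  have h2 : HasDerivAt (fun l : ℝ => (l ^ 2)⁻¹) (-(↑(2:ℕ) * l ^ 1) / (l ^ 2) ^ 2) l :=
    (hasDerivAt_pow 2 l).inv (pow_ne_zero 2 hl)
  have h3 : HasDerivAt (fun l : ℝ => (∫ s in (0:ℝ)..(l * v), f s) * (l ^ 2)⁻¹)
      (f (l * v) * v * (l ^ 2)⁻¹ + (∫ s in (0:ℝ)..(l * v), f s) * (-(↑(2:ℕ) * l ^ 1) / (l ^ 2) ^ 2)) l :=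
    h1.mul h2
  convert h3 using 1
  field_simp
  ring

lemma prim_scale_le {f : ℝ → ℝ} (hf : Continuous f)
    (h : ∀ w : ℝ, w * f w - 2 * (∫ s in (0:ℝ)..w, f s) ≤ 0)
    (v : ℝ) {lam : ℝ} (hlam : 1 ≤ lam) :
    (∫ s in (0:ℝ)..(lam * v), f s) ≤ lam ^ 2 * ∫ s in (0:ℝ)..v, f s := by
  set g : ℝ → ℝ := fun l => (∫ s in (0:ℝ)..(l * v), f s) * (l ^ 2)⁻¹ with hg
  have hne : ∀ l : ℝ, l ∈ Ici (1:ℝ) → l ≠ 0 := fun l hl => by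
    have : (1:ℝ) ≤ l := hl; intro hc; rw [hc] at this; linarith
  have anti : AntitoneOn g (Ici 1) := by
    apply antitoneOn_of_deriv_nonpos (convex_Ici 1)
    · exact fun l hl => ((scale_aux hf v (hne l hl)).differentiableAt.continuousAt).continuousWithinAt
    · intro l hl
      rw [interior_Ici] at hl
      exact (scale_aux hf v (hne l (mem_Ici.mpr (le_of_lt (mem_Ioi.mp hl))))).differentiableAt.differentiableWithinAt
    · intro l hl
      rw [interior_Ici] at hl
      have hl0 : (0:ℝ) < l := lt_trans one_pos hl
      rw [(scale_aux hf v hl0.ne').deriv]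
      apply div_nonpos_of_nonpos_of_nonneg
      · have := h (l * v); linarith
      · positivity
  have key : g lam ≤ g 1 := anti (self_mem_Ici) hlam hlam
  have hg1 : g 1 = ∫ s in (0:ℝ)..v, f s := by simp [hg]
  have hlam0 : (0:ℝ) < lam ^ 2 := by positivity
  calc (∫ s in (0:ℝ)..(lam*v), f s) = g lam * lam ^ 2 := by
        simp only [hg]; field_simp
    _ ≤ g 1 * lam ^ 2 := mul_le_mul_of_nonneg_right key hlam0.le
    _ = _ := by rw [hg1]; ring

lemma prim_scale_lt {f : ℝ → ℝ} (hf : Continuous f)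
    (h : ∀ w : ℝ, w ≠ 0 → w * f w - 2 * (∫ s in (0:ℝ)..w, f s) < 0)
    {v : ℝ} (hv : v ≠ 0) {lam : ℝ} (hlam : 1 < lam) :
    (∫ s in (0:ℝ)..(lam * v), f s) < lam ^ 2 * ∫ s in (0:ℝ)..v, f s := by
  set g : ℝ → ℝ := fun l => (∫ s in (0:ℝ)..(l * v), f s) * (l ^ 2)⁻¹ with hg
  have hne : ∀ l : ℝ, l ∈ Ici (1:ℝ) → l ≠ 0 := fun l hl => by
    have : (1:ℝ) ≤ l := hl; intro hc; rw [hc] at this; linarith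
  have anti : StrictAntiOn g (Ici 1) := by
    apply strictAntiOn_of_deriv_neg (convex_Ici 1)
    · exact fun l hl => ((scale_aux hf v (hne l hl)).differentiableAt.continuousAt).continuousWithinAt
    · intro l hl
      rw [interior_Ici] at hl
      have hl0 : (0:ℝ) < l := lt_trans one_pos hl
      rw [(scale_aux hf v hl0.ne').deriv]
      apply div_neg_of_neg_of_pos
      · have := h (l * v) (mul_ne_zero hl0.ne' hv); linarith
      · positivity
  have key : g lam < g 1 := anti (self_mem_Ici) hlam.le hlam
  have hg1 : g 1 = ∫ s in (0:ℝ)..v, f s := by simp [hg]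
  have hlam0 : (0:ℝ) < lam ^ 2 := by positivity
  calc (∫ s in (0:ℝ)..(lam*v), f s) = g lam * lam ^ 2 := by
        simp only [hg]; field_simp
    _ < g 1 * lam ^ 2 := mul_lt_mul_of_pos_right key hlam0
    _ = _ := by rw [hg1]; ring

end Stmt11Aux

open Stmt11Aux

set_option maxHeartbeats 1000000 in
theorem stmt11
    (T : ℝ) (hT0 : 0 < T) (hT1 : T ≤ 1)
    (N : ℕ) (hN : 1 ≤ N)
    (ss tt : ℕ → ℝ)
    (hs0 : ss 0 = 0) (htN : tt (N + 1) = T)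
    (hst : ∀ i ≤ N, ss i < tt (i + 1))
    (hts : ∀ i, 1 ≤ i → i ≤ N → tt i < ss i)
    (h : ℝ → ℝ) (hh : ContinuousOn h (Icc 0 T))
    (H : ℝ → ℝ) (hH : ∀ t, H t = ∫ τ in (0:ℝ)..t, h τ)
    (H₀ : ℝ) (hH₀ : IsLeast (H '' Icc 0 T) H₀)
    (β : ℝ) (hβ : β < 2 * Real.exp H₀ / T ^ 2)
    (θ₁ θ₂ A₁ a₂ : ℝ)
    (hθ₁ : 1 < θ₁) (hθ₁' : θ₁ < 2) (hθ₂ : 1 < θ₂) (hθ₂' : θ₂ < 2)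
    (hA₁ : 0 < A₁) (ha₂ : 0 < a₂)
    (ftilde : ℕ → ℝ → ℝ → ℝ)
    (hft_cont : ∀ i ≤ N, Continuous (Function.uncurry (ftilde i)))
    (Ftilde : ℕ → ℝ → ℝ → ℝ)
    (hFt : ∀ i t v, Ftilde i t v = ∫ s in (0:ℝ)..v, ftilde i t s)
    (hft_odd : ∀ i ≤ N, ∀ t ∈ Ioc (ss i) (tt (i + 1)), ∀ v : ℝ,
      ftilde i t (-v) = - ftilde i t v)
    (hFt_nonneg : ∀ i ≤ N, ∀ t ∈ Ioc (ss i) (tt (i + 1)), ∀ v : ℝ,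
      0 ≤ Ftilde i t v)
    (hsub : ∀ i ≤ N, ∀ t ∈ Ioc (ss i) (tt (i + 1)), ∀ v : ℝ, v ≠ 0 →
      v * ftilde i t v - 2 * Ftilde i t v < 0)
    (hft_bound : ∀ i ≤ N, ∀ t ∈ Ioc (ss i) (tt (i + 1)), ∀ v : ℝ,
      |ftilde i t v| ≤ A₁ * |v| ^ (θ₁ - 1))
    (hFt_super : ∀ i ≤ N, ∀ M : ℝ, 0 < M → ∃ ρ : ℝ, 0 < ρ ∧
      ∀ t ∈ Ioc (ss i) (tt (i + 1)), ∀ v : ℝ, 0 < |v| → |v| ≤ ρ →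
        M * v ^ 2 ≤ Ftilde i t v)
    (Itilde : ℕ → ℝ → ℝ)
    (hIt_cont : ∀ i, 1 ≤ i → i ≤ N → Continuous (Itilde i))
    (hIt_odd : ∀ i, 1 ≤ i → i ≤ N → ∀ v : ℝ, Itilde i (-v) = - Itilde i v)
    (hIt_bound : ∀ i, 1 ≤ i → i ≤ N → ∀ v : ℝ,
      |Itilde i v| ≤ a₂ * (|v| ^ (θ₂ - 1) + 1))
    (hIt_nonneg : ∀ i, 1 ≤ i → i ≤ N → ∀ v : ℝ,
      0 ≤ ∫ s in (0:ℝ)..v, Itilde i s)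
    (hIt_ineq : ∀ i, 1 ≤ i → i ≤ N → ∀ v : ℝ,
      Itilde i v * v ≤ 2 * ∫ s in (0:ℝ)..v, Itilde i s)
    (J₀ : (ℝ → ℝ) → (ℝ → ℝ) → (ℝ → ℝ) → ℝ)
    (hJ₀ : ∀ u u' u'' : ℝ → ℝ, J₀ u u' u'' =
      (1 / 2) * (∫ x in (0:ℝ)..T, Real.exp (H x) * |u'' x| ^ 2)
      - (β / 2) * (∫ x in (0:ℝ)..T, |u' x| ^ 2)
      - (∑ i ∈ Finset.range (N + 1),
          ∫ x in (ss i)..(tt (i + 1)), Real.exp (H x) * Ftilde i x (u x))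
      - (∑ i ∈ Finset.Icc 1 N,
          ∫ s in (0:ℝ)..(u (tt i)), Real.exp (H (tt i)) * Itilde i s)) :
    ∀ u u' u'' : ℝ → ℝ, IsInE T u u' u'' →
      (∃ i ≤ N, ∃ x ∈ Ioc (ss i) (tt (i + 1)), u x ≠ 0) →
      ∃! c₀ : ℝ, 0 < c₀ ∧
        (∀ c : ℝ, 0 < |c| → |c| < c₀ →
          J₀ (fun x => c * u x) (fun x => c * u' x) (fun x => c * u'' x) < 0) ∧
        (∀ c : ℝ, c₀ ≤ |c| →
          0 ≤ J₀ (fun x => c * u x) (fun x => c * u' x) (fun x => c * u'' x)) := by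
  intro u u' u'' hE hnz
  obtain ⟨hu', hu'', hu''c, hu0, huT, hu'0, hu'T⟩ := hE
  obtain ⟨i₀, hi₀N, x₀, hx₀, hux₀⟩ := hnz
  -- continuity of u, u'
  have hucont : ContinuousOn u (Icc 0 T) :=
    fun t ht => (hu' t ht).continuousAt.continuousWithinAt
  have hu'cont : ContinuousOn u' (Icc 0 T) :=
    fun t ht => (hu'' t ht).continuousAt.continuousWithinAt
  -- bounds on the partition
  have hss0 : ∀ i, i ≤ N → 0 ≤ ss i := by
    intro i
    induction i with
    | zero => intro _; rw [hs0]
    | succ n ih =>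
      intro hn
      have h1 := ih (by omega)
      have h2 := hst n (by omega)
      have h3 := hts (n + 1) (by omega) hn
      linarith
  have httT0 : ∀ k, k ≤ N → tt (N + 1 - k) ≤ T := by
    intro k
    induction k with
    | zero => intro _; simp [htN]
    | succ n ih =>
      intro hn
      have h1 : tt (N - n) < ss (N - n) := hts (N - n) (by omega) (by omega)
      have h2 : ss (N - n) < tt (N - n + 1) := hst (N - n) (by omega)
      have h3 : tt (N - n + 1) ≤ T := by
        have h4 := ih (by omega)
        have h5 : N + 1 - n = N - n + 1 := by omega
        rwa [h5] at h4
      have h6 : N + 1 - (n + 1) = N - n := by omega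
      rw [h6]; linarith
  have httT : ∀ i, 1 ≤ i → i ≤ N + 1 → tt i ≤ T := by
    intro i h1 h2
    have h3 := httT0 (N + 1 - i) (by omega)
    rwa [show N + 1 - (N + 1 - i) = i by omega] at h3
  have hIoc_sub : ∀ i, i ≤ N → Ioc (ss i) (tt (i + 1)) ⊆ Icc 0 T := by
    intro i hi y hy
    exact ⟨le_trans (hss0 i hi) hy.1.le, le_trans hy.2 (httT (i + 1) (by omega) (by omega))⟩
  have httmem : ∀ i, 1 ≤ i → i ≤ N → tt i ∈ Icc 0 T := by
    intro i h1 h2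
    constructor
    · have h3 := hss0 (i - 1) (by omega)
      have h4 := hst (i - 1) (by omega)
      rw [show i - 1 + 1 = i by omega] at h4
      linarith
    · exact httT i h1 (by omega)
  -- continuity of H
  have hHcont : ContinuousOn H (Icc 0 T) := by
    have h1 : IntegrableOn h (uIcc 0 T) volume := by
      rw [uIcc_of_le hT0.le]; exact hh.integrableOn_Icc
    have h2 := intervalIntegral.continuousOn_primitive_interval (a := 0) (b := T)
      (μ := volume) (f := h) h1
    rw [uIcc_of_le hT0.le] at h2
    exact h2.congr (fun t _ => hH t)
  -- clamped extensions
  have hτcont : Continuous (fun x : ℝ => max 0 (min x T)) :=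
    continuous_const.max (continuous_id.min continuous_const)
  have hτmem : ∀ x : ℝ, max 0 (min x T) ∈ Icc (0:ℝ) T :=
    fun x => ⟨le_max_left _ _, max_le hT0.le (min_le_right x T)⟩
  have hτid : ∀ x ∈ Icc (0:ℝ) T, max 0 (min x T) = x := by
    intro x hx
    rw [min_eq_left hx.2, max_eq_right hx.1]
  set HE : ℝ → ℝ := fun x => H (max 0 (min x T)) with hHE
  have hHEcont : Continuous HE := hHcont.comp_continuous hτcont hτmem
  have hHEeq : ∀ x ∈ Icc (0:ℝ) T, HE x = H x := fun x hx => by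
    show H (max 0 (min x T)) = H x
    rw [hτid x hx]
  set uE : ℝ → ℝ := fun x => u (max 0 (min x T)) with huE
  have huEcont : Continuous uE := hucont.comp_continuous hτcont hτmem
  have huEeq : ∀ x ∈ Icc (0:ℝ) T, uE x = u x := fun x hx => by
    show u (max 0 (min x T)) = u x
    rw [hτid x hx]
  -- bounds
  obtain ⟨B₀, hB₀⟩ := isCompact_Icc.exists_bound_of_continuousOn hucont
  set B : ℝ := max B₀ 1 with hBdef
  have hB1 : (1:ℝ) ≤ B := le_max_right _ _
  have hB0 : (0:ℝ) < B := lt_of_lt_of_le one_pos hB1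
  have hBu : ∀ x ∈ Icc (0:ℝ) T, |u x| ≤ B :=
    fun x hx => le_trans (hB₀ x hx) (le_max_left _ _)
  obtain ⟨E₀, hE₀⟩ := isCompact_Icc.exists_bound_of_continuousOn
    ((continuous_exp.comp_continuousOn hHcont))
  set EM : ℝ := max E₀ 1 with hEMdef
  have hEM0 : (0:ℝ) < EM := lt_of_lt_of_le one_pos (le_max_right _ _)
  have hEMb : ∀ x ∈ Icc (0:ℝ) T, Real.exp (H x) ≤ EM := by
    intro x hx
    have := hE₀ x hx
    rw [Function.comp_apply, Real.norm_eq_abs, abs_of_pos (exp_pos _)] at this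
    exact le_trans this (le_max_left _ _)
  have hH₀le : ∀ x ∈ Icc (0:ℝ) T, Real.exp H₀ ≤ Real.exp (H x) :=
    fun x hx => exp_le_exp.mpr (hH₀.2 ⟨x, hx, rfl⟩)
  -- FTC facts
  have hu''int : ∀ a b, a ∈ Icc (0:ℝ) T → b ∈ Icc (0:ℝ) T →
      IntervalIntegrable u'' volume a b := by
    intro a b ha hb
    apply ContinuousOn.intervalIntegrable
    apply hu''c.mono
    intro y hy
    rcases le_total a b with hab | hab
    · rw [uIcc_of_le hab] at hy
      exact ⟨le_trans ha.1 hy.1, le_trans hy.2 hb.2⟩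
    · rw [uIcc_of_ge hab] at hy
      exact ⟨le_trans hb.1 hy.1, le_trans hy.2 ha.2⟩
  have hFTCu' : ∀ t ∈ Icc (0:ℝ) T, u' t = ∫ x in (0:ℝ)..t, u'' x := by
    intro t ht
    have h1 : ∫ x in (0:ℝ)..t, u'' x = u' t - u' 0 := by
      apply intervalIntegral.integral_eq_sub_of_hasDerivAt
      · intro x hx
        rw [uIcc_of_le ht.1] at hx
        exact hu'' x ⟨hx.1, le_trans hx.2 ht.2⟩
      · exact hu''int 0 t (left_mem_Icc.mpr hT0.le) ht
    rw [h1, hu'0, sub_zero]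
  have hx₀T : x₀ ∈ Icc (0:ℝ) T := hIoc_sub i₀ hi₀N hx₀
  -- U > 0
  set U : ℝ := ∫ x in (0:ℝ)..T, Real.exp (H x) * |u'' x| ^ 2 with hUdef
  set V : ℝ := ∫ x in (0:ℝ)..T, |u' x| ^ 2 with hVdef
  have hWc : ContinuousOn (fun x => Real.exp (H x) * |u'' x| ^ 2) (Icc 0 T) :=
    (continuous_exp.comp_continuousOn hHcont).mul ((hu''c.abs).pow 2)
  have hWnn : ∀ x : ℝ, 0 ≤ Real.exp (H x) * |u'' x| ^ 2 :=
    fun x => mul_nonneg (exp_pos _).le (by positivity)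
  have hWint : ∀ a b, a ∈ Icc (0:ℝ) T → b ∈ Icc (0:ℝ) T →
      IntervalIntegrable (fun x => Real.exp (H x) * |u'' x| ^ 2) volume a b := by
    intro a b ha hb
    apply ContinuousOn.intervalIntegrable
    apply hWc.mono
    intro y hy
    rcases le_total a b with hab | hab
    · rw [uIcc_of_le hab] at hy
      exact ⟨le_trans ha.1 hy.1, le_trans hy.2 hb.2⟩
    · rw [uIcc_of_ge hab] at hy
      exact ⟨le_trans hb.1 hy.1, le_trans hy.2 ha.2⟩
  have hUpos : 0 < U := by
    have hne : ∃ x₁ ∈ Icc (0:ℝ) T, u'' x₁ ≠ 0 := by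
      by_contra hcon
      push_neg at hcon
      have hu'z : ∀ t ∈ Icc (0:ℝ) T, u' t = 0 := by
        intro t ht
        rw [hFTCu' t ht]
        rw [intervalIntegral.integral_congr (g := fun _ => (0:ℝ))
          (fun x hx => by
            rw [uIcc_of_le ht.1] at hx
            exact hcon x ⟨hx.1, le_trans hx.2 ht.2⟩)]
        simp
      have hFTCu : u x₀ = ∫ x in (0:ℝ)..x₀, u' x := by
        have h1 : ∫ x in (0:ℝ)..x₀, u' x = u x₀ - u 0 := by
          apply intervalIntegral.integral_eq_sub_of_hasDerivAt
          · intro x hx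
            rw [uIcc_of_le hx₀T.1] at hx
            exact hu' x ⟨hx.1, le_trans hx.2 hx₀T.2⟩
          · apply ContinuousOn.intervalIntegrable
            apply hu'cont.mono
            intro y hy
            rw [uIcc_of_le hx₀T.1] at hy
            exact ⟨hy.1, le_trans hy.2 hx₀T.2⟩
        rw [h1, hu0, sub_zero]
      apply hux₀
      rw [hFTCu]
      rw [intervalIntegral.integral_congr (g := fun _ => (0:ℝ))
        (fun x hx => by
          rw [uIcc_of_le hx₀T.1] at hx
          exact hu'z x ⟨hx.1, le_trans hx.2 hx₀T.2⟩)]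
      simp
    obtain ⟨x₁, hx₁, hx₁ne⟩ := hne
    set δ : ℝ := |u'' x₁| / 2 with hδdef
    have hδpos : 0 < δ := by
      rw [hδdef]
      have := abs_pos.mpr hx₁ne
      linarith
    obtain ⟨η, hηpos, hη⟩ := Metric.continuousWithinAt_iff.mp (hu''c x₁ hx₁) δ hδpos
    set a : ℝ := max 0 (x₁ - η / 2) with hadef
    set b : ℝ := min T (x₁ + η / 2) with hbdef
    have hab : a < b := by
      rw [hadef, hbdef]
      apply max_lt
      · apply lt_min hT0 (by linarith [hx₁.1])
      · apply lt_min (by linarith [hx₁.2]) (by linarith)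
    have hsubT : Icc a b ⊆ Icc (0:ℝ) T := fun y hy =>
      ⟨le_trans (le_max_left _ _) hy.1, le_trans hy.2 (min_le_left _ _)⟩
    have hlow : ∀ y ∈ Icc a b, δ ≤ |u'' y| := by
      intro y hy
      have hd : dist y x₁ < η := by
        rw [Real.dist_eq, abs_lt]
        constructor
        · have : x₁ - η / 2 ≤ a := le_max_right _ _
          have := hy.1; linarith
        · have : b ≤ x₁ + η / 2 := min_le_right _ _
          have := hy.2; linarith
      have := hη (hsubT hy) hd
      rw [Real.dist_eq] at this
      have h2 := abs_sub_abs_le_abs_sub (u'' x₁) (u'' y)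
      rw [abs_sub_comm] at h2
      rw [hδdef] at this ⊢
      linarith
    have ha0T : a ∈ Icc (0:ℝ) T := hsubT ⟨le_refl a, hab.le⟩
    have hb0T : b ∈ Icc (0:ℝ) T := hsubT ⟨hab.le, le_refl b⟩
    have hdecomp : U = (∫ x in (0:ℝ)..a, Real.exp (H x) * |u'' x| ^ 2)
        + (∫ x in a..b, Real.exp (H x) * |u'' x| ^ 2)
        + (∫ x in b..T, Real.exp (H x) * |u'' x| ^ 2) := by
      rw [hUdef]
      rw [intervalIntegral.integral_add_adjacent_intervals
        (hWint 0 a (left_mem_Icc.mpr hT0.le) ha0T) (hWint a b ha0T hb0T)]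
      rw [intervalIntegral.integral_add_adjacent_intervals
        (hWint 0 b (left_mem_Icc.mpr hT0.le) hb0T) (hWint b T hb0T (right_mem_Icc.mpr hT0.le))]
    rw [hdecomp]
    have hp1 : 0 ≤ ∫ x in (0:ℝ)..a, Real.exp (H x) * |u'' x| ^ 2 :=
      int_nonneg 0 a ha0T.1 (fun x _ => hWnn x)
    have hp3 : 0 ≤ ∫ x in b..T, Real.exp (H x) * |u'' x| ^ 2 :=
      int_nonneg b T hb0T.2 (fun x _ => hWnn x)
    have hp2 : 0 < ∫ x in a..b, Real.exp (H x) * |u'' x| ^ 2 := by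
      apply int_pos a b hab (hWc.mono hsubT)
      intro x hx
      have h1 := hlow x hx
      have h2 : 0 < |u'' x| := lt_of_lt_of_le hδpos h1
      exact mul_pos (exp_pos _) (by positivity)
    linarith
  -- Poincare inequality
  have hsqint : ∀ a b, a ∈ Icc (0:ℝ) T → b ∈ Icc (0:ℝ) T →
      IntervalIntegrable (fun x => (u'' x) ^ 2) volume a b := by
    intro a b ha hb
    apply ContinuousOn.intervalIntegrable
    apply (hu''c.pow 2).mono
    intro y hy
    rcases le_total a b with hab | hab
    · rw [uIcc_of_le hab] at hy
      exact ⟨le_trans ha.1 hy.1, le_trans hy.2 hb.2⟩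
    · rw [uIcc_of_ge hab] at hy
      exact ⟨le_trans hb.1 hy.1, le_trans hy.2 ha.2⟩
  have hCS : ∀ t ∈ Icc (0:ℝ) T, (u' t) ^ 2 ≤ t * ∫ x in (0:ℝ)..t, (u'' x) ^ 2 := by
    intro t ht
    rcases eq_or_lt_of_le ht.1 with h0 | h0
    · rw [← h0]
      simp [hu'0]
    · set A : ℝ := u' t / t with hAdef
      have hAt : A * t = u' t := by
        rw [hAdef]; field_simp
      have hnn : 0 ≤ ∫ x in (0:ℝ)..t, (u'' x - A) ^ 2 :=
        int_nonneg 0 t h0.le (fun x _ => sq_nonneg _)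
      have hexp : ∫ x in (0:ℝ)..t, (u'' x - A) ^ 2
          = (∫ x in (0:ℝ)..t, (u'' x) ^ 2) - 2 * A * (u' t) + A ^ 2 * t := by
        have heq : (fun x => (u'' x - A) ^ 2)
            = fun x => ((u'' x) ^ 2 - 2 * A * u'' x) + A ^ 2 := by
          ext x; ring
        rw [heq]
        rw [intervalIntegral.integral_add ((hsqint 0 t (left_mem_Icc.mpr hT0.le) ht).sub
          ((hu''int 0 t (left_mem_Icc.mpr hT0.le) ht).const_mul (2 * A)))
          intervalIntegrable_const]
        rw [intervalIntegral.integral_sub (hsqint 0 t (left_mem_Icc.mpr hT0.le) ht)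
          ((hu''int 0 t (left_mem_Icc.mpr hT0.le) ht).const_mul (2 * A))]
        rw [intervalIntegral.integral_const_mul, intervalIntegral.integral_const]
        rw [← hFTCu' t ht]
        rw [smul_eq_mul]
        ring
      rw [hexp] at hnn
      nlinarith [hnn, hAt, h0, mul_nonneg h0.le hnn]
  have hCmono : ∀ t ∈ Icc (0:ℝ) T, (∫ x in (0:ℝ)..t, (u'' x) ^ 2)
      ≤ ∫ x in (0:ℝ)..T, (u'' x) ^ 2 := by
    intro t ht
    have hdec : (∫ x in (0:ℝ)..T, (u'' x) ^ 2)
        = (∫ x in (0:ℝ)..t, (u'' x) ^ 2) + ∫ x in t..T, (u'' x) ^ 2 := by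
      rw [intervalIntegral.integral_add_adjacent_intervals
        (hsqint 0 t (left_mem_Icc.mpr hT0.le) ht) (hsqint t T ht (right_mem_Icc.mpr hT0.le))]
    have h2 : 0 ≤ ∫ x in t..T, (u'' x) ^ 2 := int_nonneg t T ht.2 (fun x _ => sq_nonneg _)
    linarith
  have hVbound : V ≤ T ^ 2 / 2 * ∫ x in (0:ℝ)..T, (u'' x) ^ 2 := by
    set C2 : ℝ := ∫ x in (0:ℝ)..T, (u'' x) ^ 2 with hC2def
    have h1 : V ≤ ∫ t in (0:ℝ)..T, t * C2 := by
      rw [hVdef]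
      apply int_mono 0 T hT0.le
      · apply ContinuousOn.intervalIntegrable
        apply ((hu'cont.abs).pow 2).mono
        intro y hy; rwa [uIcc_of_le hT0.le] at hy
      · apply ContinuousOn.intervalIntegrable
        exact (continuousOn_id.mul continuousOn_const)
      · intro t htIoc
        have ht : t ∈ Icc (0:ℝ) T := ⟨htIoc.1.le, htIoc.2⟩
        have h2 := hCS t ht
        have h3 := hCmono t ht
        rw [sq_abs]
        calc (u' t) ^ 2 ≤ t * ∫ x in (0:ℝ)..t, (u'' x) ^ 2 := h2
          _ ≤ t * C2 := by
              apply mul_le_mul_of_nonneg_left h3 ht.1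
    have h2 : ∫ t in (0:ℝ)..T, t * C2 = T ^ 2 / 2 * C2 := by
      rw [intervalIntegral.integral_mul_const, integral_id]
      ring
    linarith
  have hC2U : (∫ x in (0:ℝ)..T, (u'' x) ^ 2) ≤ Real.exp (-H₀) * U := by
    have h1 : (∫ x in (0:ℝ)..T, Real.exp (-H₀) * (Real.exp (H x) * |u'' x| ^ 2))
        = Real.exp (-H₀) * U := by
      rw [hUdef, intervalIntegral.integral_const_mul]
    rw [← h1]
    apply int_mono 0 T hT0.le (hsqint 0 T (left_mem_Icc.mpr hT0.le) (right_mem_Icc.mpr hT0.le))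
    · exact (hWint 0 T (left_mem_Icc.mpr hT0.le) (right_mem_Icc.mpr hT0.le)).const_mul _
    · intro x hxIoc
      have hx : x ∈ Icc (0:ℝ) T := ⟨hxIoc.1.le, hxIoc.2⟩
      have h2 : (1:ℝ) ≤ Real.exp (-H₀) * Real.exp (H x) := by
        rw [← Real.exp_add]
        rw [show -H₀ + H x = H x - H₀ by ring]
        rw [← Real.exp_zero]
        apply Real.exp_le_exp.mpr
        have := hH₀.2 ⟨x, hx, rfl⟩
        linarith
      calc (u'' x) ^ 2 = 1 * (u'' x) ^ 2 := by ring
        _ ≤ (Real.exp (-H₀) * Real.exp (H x)) * (u'' x) ^ 2 :=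
            mul_le_mul_of_nonneg_right h2 (sq_nonneg _)
        _ = Real.exp (-H₀) * (Real.exp (H x) * |u'' x| ^ 2) := by
            rw [sq_abs]; ring
  have hVnonneg : 0 ≤ V := int_nonneg 0 T hT0.le (fun x _ => by positivity)
  set Q : ℝ := U / 2 - β / 2 * V with hQdef
  have hQpos : 0 < Q := by
    rcases le_or_gt β 0 with hb0 | hb0
    · have : β / 2 * V ≤ 0 := mul_nonpos_of_nonpos_of_nonneg (by linarith) hVnonneg
      rw [hQdef]; linarith
    · have h1 : V ≤ T ^ 2 / 2 * (Real.exp (-H₀) * U) := by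
        have := mul_le_mul_of_nonneg_left hC2U (by positivity : (0:ℝ) ≤ T ^ 2 / 2)
        linarith [hVbound]
      have h2 : β * T ^ 2 < 2 * Real.exp H₀ := by
        rw [div_eq_mul_inv] at hβ
        have hT2 : (0:ℝ) < T ^ 2 := by positivity
        calc β * T ^ 2 < (2 * Real.exp H₀ * (T ^ 2)⁻¹) * T ^ 2 :=
              mul_lt_mul_of_pos_right hβ hT2
          _ = 2 * Real.exp H₀ := by field_simp
      have hexpinv : Real.exp H₀ * Real.exp (-H₀) = 1 := by
        rw [← Real.exp_add]; simp
      have h3 : β * V < U := by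
        have h4 : β * V ≤ β * (T ^ 2 / 2 * (Real.exp (-H₀) * U)) :=
          mul_le_mul_of_nonneg_left h1 hb0.le
        have h5 : β * (T ^ 2 / 2 * (Real.exp (-H₀) * U)) < U := by
          have hmul : (0:ℝ) < Real.exp (-H₀) * U / 2 := by positivity
          have h6 := mul_lt_mul_of_pos_right h2 hmul
          calc β * (T ^ 2 / 2 * (Real.exp (-H₀) * U))
              = β * T ^ 2 * (Real.exp (-H₀) * U / 2) := by ring
            _ < 2 * Real.exp H₀ * (Real.exp (-H₀) * U / 2) := h6
            _ = Real.exp H₀ * Real.exp (-H₀) * U := by ring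
            _ = U := by rw [hexpinv]; ring
        linarith
      rw [hQdef]; linarith
  -- the functional pieces
  set G : ℕ → ℝ → ℝ := fun i c =>
    ∫ x in (ss i)..(tt (i + 1)), Real.exp (H x) * Ftilde i x (c * u x) with hGdef
  set K : ℕ → ℝ → ℝ := fun i c =>
    ∫ s in (0:ℝ)..(c * u (tt i)), Real.exp (H (tt i)) * Itilde i s with hKdef
  set P : ℝ → ℝ := fun c =>
    (∑ i ∈ Finset.range (N + 1), G i c) + ∑ i ∈ Finset.Icc 1 N, K i c with hPdef
  set Φ : ℝ → ℝ := fun c => Q * c ^ 2 - P c with hΦdef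
  have hΦ : ∀ c : ℝ, J₀ (fun x => c * u x) (fun x => c * u' x) (fun x => c * u'' x) = Φ c := by
    intro c
    rw [hJ₀]
    have e1 : (∫ x in (0:ℝ)..T, Real.exp (H x) * |(fun x => c * u'' x) x| ^ 2)
        = c ^ 2 * U := by
      rw [hUdef, ← intervalIntegral.integral_const_mul]
      apply intervalIntegral.integral_congr
      intro x _
      simp only [abs_mul, mul_pow, sq_abs]
      try ring
    have e2 : (∫ x in (0:ℝ)..T, |(fun x => c * u' x) x| ^ 2) = c ^ 2 * V := by
      rw [hVdef, ← intervalIntegral.integral_const_mul]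
      apply intervalIntegral.integral_congr
      intro x _
      simp only [abs_mul, mul_pow, sq_abs]
      try ring
    rw [e1, e2]
    simp only [hΦdef, hPdef, hGdef, hKdef, hQdef]
    ring
  have hIcc_sub : ∀ i, i ≤ N → Icc (ss i) (tt (i + 1)) ⊆ Icc (0:ℝ) T := by
    intro i hi y hy
    exact ⟨le_trans (hss0 i hi) hy.1, le_trans hy.2 (httT (i + 1) (by omega) (by omega))⟩
  have hFjoint : ∀ i, i ≤ N → Continuous (fun p : ℝ × ℝ => Ftilde i p.1 p.2) := by
    intro i hi
    have h1 : Continuous (Function.uncurry (fun (p : ℝ × ℝ) (s : ℝ) => ftilde i p.1 s)) := by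
      have he : Function.uncurry (fun (p : ℝ × ℝ) (s : ℝ) => ftilde i p.1 s)
          = (Function.uncurry (ftilde i)) ∘ (fun q : (ℝ × ℝ) × ℝ => (q.1.1, q.2)) := rfl
      rw [he]
      exact (hft_cont i hi).comp (by fun_prop)
    have h2 := intervalIntegral.continuous_parametric_intervalIntegral_of_continuous
      (μ := volume) (a₀ := 0) h1 (continuous_snd)
    exact h2.congr (fun p => (hFt i p.1 p.2).symm)
  have hGint : ∀ i, i ≤ N → ∀ c : ℝ, IntervalIntegrable
      (fun x => Real.exp (H x) * Ftilde i x (c * u x)) volume (ss i) (tt (i + 1)) := by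
    intro i hi c
    apply ContinuousOn.intervalIntegrable
    have hsubI : uIcc (ss i) (tt (i + 1)) ⊆ Icc (0:ℝ) T := by
      rw [uIcc_of_le (hst i hi).le]
      exact hIcc_sub i hi
    apply ContinuousOn.mul
    · exact continuous_exp.comp_continuousOn (hHcont.mono hsubI)
    · have hc : ContinuousOn (fun x : ℝ => (x, c * u x)) (uIcc (ss i) (tt (i + 1))) :=
        continuousOn_id.prodMk (continuousOn_const.mul (hucont.mono hsubI))
      exact (hFjoint i hi).comp_continuousOn hc
  have hGnonneg : ∀ i, i ≤ N → ∀ c : ℝ, 0 ≤ G i c := by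
    intro i hi c
    simp only [hGdef]
    apply int_nonneg _ _ (hst i hi).le
    intro x hx
    exact mul_nonneg (exp_pos _).le (hFt_nonneg i hi x hx _)
  have hK_eq : ∀ i (c : ℝ), K i c
      = Real.exp (H (tt i)) * ∫ s in (0:ℝ)..(c * u (tt i)), Itilde i s := by
    intro i c
    simp only [hKdef]
    rw [intervalIntegral.integral_const_mul]
  have hKnonneg : ∀ i, 1 ≤ i → i ≤ N → ∀ c : ℝ, 0 ≤ K i c := by
    intro i h1 h2 c
    rw [hK_eq]
    exact mul_nonneg (exp_pos _).le (hIt_nonneg i h1 h2 _)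
  have hGcont : ∀ i, i ≤ N → Continuous (fun c => G i c) := by
    intro i hi
    have hicc := hIcc_sub i hi
    have heq : ∀ c : ℝ, G i c = ∫ x in (ss i)..(tt (i + 1)),
        Real.exp (HE x) * ∫ s in (0:ℝ)..(c * uE x), ftilde i x s := by
      intro c
      simp only [hGdef]
      apply intervalIntegral.integral_congr
      intro x hx
      rw [uIcc_of_le (hst i hi).le] at hx
      show Real.exp (H x) * Ftilde i x (c * u x)
          = Real.exp (HE x) * ∫ s in (0:ℝ)..(c * uE x), ftilde i x s
      rw [hHEeq x (hicc hx), huEeq x (hicc hx), hFt]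
    have h1 : Continuous (Function.uncurry (fun (p : ℝ × ℝ) (s : ℝ) => ftilde i p.2 s)) := by
      have he : Function.uncurry (fun (p : ℝ × ℝ) (s : ℝ) => ftilde i p.2 s)
          = (Function.uncurry (ftilde i)) ∘ (fun q : (ℝ × ℝ) × ℝ => (q.1.2, q.2)) := rfl
      rw [he]
      exact (hft_cont i hi).comp (by fun_prop)
    have hinner : Continuous (fun p : ℝ × ℝ =>
        Real.exp (HE p.2) * ∫ s in (0:ℝ)..(p.1 * uE p.2), ftilde i p.2 s) := by
      apply Continuous.mul
      · exact continuous_exp.comp (hHEcont.comp continuous_snd)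
      · exact intervalIntegral.continuous_parametric_intervalIntegral_of_continuous
          (μ := volume) (a₀ := 0) h1 (continuous_fst.mul (huEcont.comp continuous_snd))
    have h2 := intervalIntegral.continuous_parametric_intervalIntegral_of_continuous'
      (μ := volume)
      (f := fun (c : ℝ) (x : ℝ) => Real.exp (HE x) * ∫ s in (0:ℝ)..(c * uE x), ftilde i x s)
      hinner (ss i) (tt (i + 1))
    exact h2.congr (fun c => (heq c).symm)
  have hKcont : ∀ i, 1 ≤ i → i ≤ N → Continuous (fun c => K i c) := by
    intro i h1 h2
    have h3 : Continuous (fun c : ℝ => ∫ s in (0:ℝ)..(c * u (tt i)), Itilde i s) := by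
      apply intervalIntegral.continuous_parametric_intervalIntegral_of_continuous
        (μ := volume) (a₀ := 0) (f := fun (_ : ℝ) (s : ℝ) => Itilde i s)
      · exact (hIt_cont i h1 h2).comp continuous_snd
      · exact continuous_id.mul continuous_const
    exact (continuous_const.mul h3).congr (fun c => (hK_eq i c).symm)
  have hPcont : Continuous P := by
    simp only [hPdef]
    apply Continuous.add
    · exact continuous_finset_sum _ (fun i hi => hGcont i (Finset.mem_range_succ_iff.mp hi))
    · exact continuous_finset_sum _
        (fun i hi => hKcont i (Finset.mem_Icc.mp hi).1 (Finset.mem_Icc.mp hi).2)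
  have hGeven : ∀ i, i ≤ N → ∀ c : ℝ, G i (-c) = G i c := by
    intro i hi c
    simp only [hGdef]
    apply intervalIntegral.integral_congr_ae
    apply Filter.Eventually.of_forall
    intro x hx
    rw [Set.uIoc_of_le (hst i hi).le] at hx
    congr 1
    rw [hFt, hFt, show -c * u x = -(c * u x) by ring]
    exact prim_even (hft_odd i hi x hx) (c * u x)
  have hKeven : ∀ i, 1 ≤ i → i ≤ N → ∀ c : ℝ, K i (-c) = K i c := by
    intro i h1 h2 c
    rw [hK_eq, hK_eq]
    congr 1
    rw [show -c * u (tt i) = -(c * u (tt i)) by ring]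
    exact prim_even (hIt_odd i h1 h2) (c * u (tt i))
  have hPeven : ∀ c : ℝ, P (-c) = P c := by
    intro c
    simp only [hPdef]
    congr 1
    · exact Finset.sum_congr rfl
        (fun i hi => hGeven i (Finset.mem_range_succ_iff.mp hi) c)
    · exact Finset.sum_congr rfl
        (fun i hi => hKeven i (Finset.mem_Icc.mp hi).1 (Finset.mem_Icc.mp hi).2 c)
  have hΦeven : ∀ c : ℝ, Φ (-c) = Φ c := by
    intro c
    simp only [hΦdef]
    rw [hPeven, neg_sq]
  -- pointwise scaling facts
  have hftx : ∀ i, i ≤ N → ∀ x : ℝ, Continuous (fun s => ftilde i x s) :=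
    fun i hi x => (hft_cont i hi).comp (Continuous.prodMk_right x)
  have hsub' : ∀ i, i ≤ N → ∀ x ∈ Ioc (ss i) (tt (i + 1)), ∀ w : ℝ,
      w * ftilde i x w - 2 * (∫ s in (0:ℝ)..w, ftilde i x s) ≤ 0 := by
    intro i hi x hx w
    rcases eq_or_ne w 0 with h0 | h0
    · rw [h0]
      simp
    · rw [← hFt]
      exact (hsub i hi x hx w h0).le
  have hsubs : ∀ i, i ≤ N → ∀ x ∈ Ioc (ss i) (tt (i + 1)), ∀ w : ℝ, w ≠ 0 →
      w * ftilde i x w - 2 * (∫ s in (0:ℝ)..w, ftilde i x s) < 0 := by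
    intro i hi x hx w h0
    rw [← hFt]
    exact hsub i hi x hx w h0
  have hFscale_le : ∀ i, i ≤ N → ∀ x ∈ Ioc (ss i) (tt (i + 1)), ∀ v : ℝ, ∀ lam : ℝ,
      1 ≤ lam → Ftilde i x (lam * v) ≤ lam ^ 2 * Ftilde i x v := by
    intro i hi x hx v lam hlam
    rw [hFt, hFt]
    exact prim_scale_le (hftx i hi x) (hsub' i hi x hx) v hlam
  have hFscale_lt : ∀ i, i ≤ N → ∀ x ∈ Ioc (ss i) (tt (i + 1)), ∀ v : ℝ, v ≠ 0 →
      ∀ lam : ℝ, 1 < lam → Ftilde i x (lam * v) < lam ^ 2 * Ftilde i x v := by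
    intro i hi x hx v hv lam hlam
    rw [hFt, hFt]
    exact prim_scale_lt (hftx i hi x) (hsubs i hi x hx) hv hlam
  have hKscale : ∀ i, 1 ≤ i → i ≤ N → ∀ w : ℝ, ∀ lam : ℝ, 1 ≤ lam →
      (∫ s in (0:ℝ)..(lam * w), Itilde i s) ≤ lam ^ 2 * ∫ s in (0:ℝ)..w, Itilde i s := by
    intro i h1 h2 w lam hlam
    apply prim_scale_le (hIt_cont i h1 h2) _ w hlam
    intro w'
    have h3 := hIt_ineq i h1 h2 w'
    have h4 : w' * Itilde i w' = Itilde i w' * w' := mul_comm _ _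
    linarith
  -- interval where u is away from zero
  set δu : ℝ := |u x₀| / 2 with hδudef
  have hδu0 : 0 < δu := by
    rw [hδudef]
    have := abs_pos.mpr hux₀
    linarith
  obtain ⟨η, hη0, hη⟩ := Metric.continuousAt_iff.mp (hu' x₀ hx₀T).continuousAt δu hδu0
  set aa : ℝ := max ((ss i₀ + x₀) / 2) (x₀ - η / 2) with haadef
  have haabb : aa < x₀ := by
    rw [haadef]
    apply max_lt (by linarith [hx₀.1]) (by linarith)
  have haIoc : Icc aa x₀ ⊆ Ioc (ss i₀) (tt (i₀ + 1)) := by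
    intro y hy
    constructor
    · have h1 : ss i₀ < (ss i₀ + x₀) / 2 := by linarith [hx₀.1]
      have h2 : (ss i₀ + x₀) / 2 ≤ aa := le_max_left _ _
      linarith [hy.1]
    · exact le_trans hy.2 hx₀.2
  have hulow : ∀ y ∈ Icc aa x₀, δu ≤ |u y| := by
    intro y hy
    have hd : dist y x₀ < η := by
      rw [Real.dist_eq, abs_lt]
      have h1 : x₀ - η / 2 ≤ aa := le_max_right _ _
      constructor
      · linarith [hy.1]
      · linarith [hy.2]
    have h2 := hη hd
    rw [Real.dist_eq] at h2
    have h3 := abs_sub_abs_le_abs_sub (u x₀) (u y)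
    rw [abs_sub_comm (u x₀) (u y)] at h3
    rw [hδudef] at h2 ⊢
    linarith
  -- scaling of P
  have hPscale : ∀ c : ℝ, 0 < c → ∀ lam : ℝ, 1 < lam → P (lam * c) < lam ^ 2 * P c := by
    intro c hc lam hlam
    have hGLE : ∀ i ∈ Finset.range (N + 1), G i (lam * c) ≤ lam ^ 2 * G i c := by
      intro i hi'
      have hi := Finset.mem_range_succ_iff.mp hi'
      simp only [hGdef]
      rw [← intervalIntegral.integral_const_mul]
      apply int_mono _ _ (hst i hi).le (hGint i hi (lam * c)) ((hGint i hi c).const_mul _)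
      intro x hx
      have h1 := hFscale_le i hi x hx (c * u x) lam hlam.le
      calc Real.exp (H x) * Ftilde i x (lam * c * u x)
          = Real.exp (H x) * Ftilde i x (lam * (c * u x)) := by rw [mul_assoc]
        _ ≤ Real.exp (H x) * (lam ^ 2 * Ftilde i x (c * u x)) :=
            mul_le_mul_of_nonneg_left h1 (exp_pos _).le
        _ = lam ^ 2 * (Real.exp (H x) * Ftilde i x (c * u x)) := by ring
    have hKLE : ∀ i ∈ Finset.Icc 1 N, K i (lam * c) ≤ lam ^ 2 * K i c := by
      intro i hi'
      obtain ⟨h1, h2⟩ := Finset.mem_Icc.mp hi'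
      rw [hK_eq, hK_eq]
      have h3 := hKscale i h1 h2 (c * u (tt i)) lam hlam.le
      calc Real.exp (H (tt i)) * ∫ s in (0:ℝ)..(lam * c * u (tt i)), Itilde i s
          = Real.exp (H (tt i)) * ∫ s in (0:ℝ)..(lam * (c * u (tt i))), Itilde i s := by
            rw [mul_assoc]
        _ ≤ Real.exp (H (tt i)) * (lam ^ 2 * ∫ s in (0:ℝ)..(c * u (tt i)), Itilde i s) :=
            mul_le_mul_of_nonneg_left h3 (exp_pos _).le
        _ = lam ^ 2 * (Real.exp (H (tt i)) * ∫ s in (0:ℝ)..(c * u (tt i)), Itilde i s) := by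
            ring
    have hGLT : G i₀ (lam * c) < lam ^ 2 * G i₀ c := by
      set D : ℝ → ℝ := fun x => lam ^ 2 * (Real.exp (H x) * Ftilde i₀ x (c * u x))
          - Real.exp (H x) * Ftilde i₀ x (lam * c * u x) with hDdef
      have hA : ContinuousOn (fun x => Real.exp (H x)) (Icc (ss i₀) (tt (i₀ + 1))) :=
        continuous_exp.comp_continuousOn (hHcont.mono (hIcc_sub i₀ hi₀N))
      have hB2 : ∀ e : ℝ, ContinuousOn (fun x => Ftilde i₀ x (e * u x))
          (Icc (ss i₀) (tt (i₀ + 1))) := fun e =>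
        (hFjoint i₀ hi₀N).comp_continuousOn
          (continuousOn_id.prodMk (continuousOn_const.mul (hucont.mono (hIcc_sub i₀ hi₀N))))
      have hDcont : ContinuousOn D (Icc (ss i₀) (tt (i₀ + 1))) :=
        (continuousOn_const.mul (hA.mul (hB2 c))).sub (hA.mul (hB2 (lam * c)))
      have hDIntSub : ∀ p q, p ∈ Icc (ss i₀) (tt (i₀ + 1)) → q ∈ Icc (ss i₀) (tt (i₀ + 1)) →
          IntervalIntegrable D volume p q := by
        intro p q hp hq
        exact (hDcont.mono (uIcc_sub hp hq)).intervalIntegrable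
      have haa' : aa ∈ Ioc (ss i₀) (tt (i₀ + 1)) := haIoc ⟨le_refl aa, haabb.le⟩
      have hbb' : x₀ ∈ Ioc (ss i₀) (tt (i₀ + 1)) := hx₀
      have hDnn : ∀ x ∈ Ioc (ss i₀) (tt (i₀ + 1)), 0 ≤ D x := by
        intro x hx
        have h1 := hFscale_le i₀ hi₀N x hx (c * u x) lam hlam.le
        have h3 := mul_le_mul_of_nonneg_left h1 (exp_pos (H x)).le
        simp only [hDdef]
        rw [mul_assoc lam c (u x)]
        nlinarith [h3]
      have hDpos : ∀ x ∈ Icc aa x₀, 0 < D x := by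
        intro x hx
        have hxIoc := haIoc hx
        have hune : c * u x ≠ 0 := by
          apply mul_ne_zero hc.ne'
          intro h0
          have := hulow x hx
          rw [h0] at this
          simp at this
          linarith
        have h1 := hFscale_lt i₀ hi₀N x hxIoc (c * u x) hune lam hlam
        have h3 := mul_lt_mul_of_pos_left h1 (exp_pos (H x))
        simp only [hDdef]
        rw [mul_assoc lam c (u x)]
        nlinarith [h3]
      have hmem_ss : ss i₀ ∈ Icc (ss i₀) (tt (i₀ + 1)) := ⟨le_refl _, (hst i₀ hi₀N).le⟩
      have hmem_tt : tt (i₀ + 1) ∈ Icc (ss i₀) (tt (i₀ + 1)) := ⟨(hst i₀ hi₀N).le, le_refl _⟩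
      have hmem_aa : aa ∈ Icc (ss i₀) (tt (i₀ + 1)) := ⟨haa'.1.le, haa'.2⟩
      have hmem_bb : x₀ ∈ Icc (ss i₀) (tt (i₀ + 1)) := ⟨hbb'.1.le, hbb'.2⟩
      have hsplit : (∫ x in (ss i₀)..(tt (i₀ + 1)), D x)
          = ((∫ x in (ss i₀)..aa, D x) + ∫ x in aa..x₀, D x)
            + ∫ x in x₀..(tt (i₀ + 1)), D x := by
        rw [intervalIntegral.integral_add_adjacent_intervals (hDIntSub _ _ hmem_ss hmem_aa)
          (hDIntSub _ _ hmem_aa hmem_bb)]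
        rw [intervalIntegral.integral_add_adjacent_intervals (hDIntSub _ _ hmem_ss hmem_bb)
          (hDIntSub _ _ hmem_bb hmem_tt)]
      have hp1 : 0 ≤ ∫ x in (ss i₀)..aa, D x :=
        int_nonneg _ _ haa'.1.le (fun x hx => hDnn x ⟨hx.1, le_trans hx.2 haa'.2⟩)
      have hp3 : 0 ≤ ∫ x in x₀..(tt (i₀ + 1)), D x :=
        int_nonneg _ _ hbb'.2 (fun x hx => hDnn x ⟨lt_trans hbb'.1 hx.1, hx.2⟩)
      have hp2 : 0 < ∫ x in aa..x₀, D x :=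
        int_pos aa x₀ haabb
          (hDcont.mono (fun y hy => ⟨(haIoc hy).1.le, (haIoc hy).2⟩)) hDpos
      have hDeq : (∫ x in (ss i₀)..(tt (i₀ + 1)), D x)
          = lam ^ 2 * G i₀ c - G i₀ (lam * c) := by
        simp only [hDdef, hGdef]
        rw [intervalIntegral.integral_sub ((hGint i₀ hi₀N c).const_mul _)
          (hGint i₀ hi₀N (lam * c))]
        rw [intervalIntegral.integral_const_mul]
      have hkey : 0 < lam ^ 2 * G i₀ c - G i₀ (lam * c) := by
        rw [← hDeq, hsplit]
        linarith
      linarith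
    have hsum1 : (∑ i ∈ Finset.range (N + 1), G i (lam * c))
        < ∑ i ∈ Finset.range (N + 1), lam ^ 2 * G i c :=
      Finset.sum_lt_sum hGLE ⟨i₀, Finset.mem_range_succ_iff.mpr hi₀N, hGLT⟩
    have hsum2 : (∑ i ∈ Finset.Icc 1 N, K i (lam * c))
        ≤ ∑ i ∈ Finset.Icc 1 N, lam ^ 2 * K i c := Finset.sum_le_sum hKLE
    simp only [hPdef]
    calc (∑ i ∈ Finset.range (N + 1), G i (lam * c)) + ∑ i ∈ Finset.Icc 1 N, K i (lam * c)
        < (∑ i ∈ Finset.range (N + 1), lam ^ 2 * G i c)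
          + ∑ i ∈ Finset.Icc 1 N, lam ^ 2 * K i c := add_lt_add_of_lt_of_le hsum1 hsum2
      _ = lam ^ 2 * ((∑ i ∈ Finset.range (N + 1), G i c) + ∑ i ∈ Finset.Icc 1 N, K i c) := by
          rw [← Finset.mul_sum, ← Finset.mul_sum]
          ring
  -- strict monotonicity of the fibering quotient
  have hψmono : StrictMonoOn (fun c => Q - P c / c ^ 2) (Ioi (0:ℝ)) := by
    intro c₁ h1 c₂ h2 hlt
    simp only [mem_Ioi] at h1 h2
    have hlam : 1 < c₂ / c₁ := (one_lt_div h1).mpr hlt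
    have hs := hPscale c₁ h1 (c₂ / c₁) hlam
    rw [div_mul_cancel₀ _ (ne_of_gt h1)] at hs
    have key : P c₂ / c₂ ^ 2 < P c₁ / c₁ ^ 2 := by
      rw [div_lt_div_iff₀ (by positivity) (by positivity)]
      have h3 := mul_lt_mul_of_pos_right hs (by positivity : (0:ℝ) < c₁ ^ 2)
      have h4 : (c₂ / c₁) ^ 2 * P c₁ * c₁ ^ 2 = P c₁ * c₂ ^ 2 := by
        field_simp
      exact lt_of_lt_of_eq h3 h4
    simp only []
    linarith
  -- general continuity/membership facts near [aa, x₀]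
  have hAx : ContinuousOn (fun x => Real.exp (H x)) (Icc (ss i₀) (tt (i₀ + 1))) :=
    continuous_exp.comp_continuousOn (hHcont.mono (hIcc_sub i₀ hi₀N))
  have hBx : ∀ e : ℝ, ContinuousOn (fun x => Ftilde i₀ x (e * u x))
      (Icc (ss i₀) (tt (i₀ + 1))) := fun e =>
    (hFjoint i₀ hi₀N).comp_continuousOn
      (continuousOn_id.prodMk (continuousOn_const.mul (hucont.mono (hIcc_sub i₀ hi₀N))))
  have haa2 : aa ∈ Ioc (ss i₀) (tt (i₀ + 1)) := haIoc ⟨le_refl aa, haabb.le⟩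
  have hmss : ss i₀ ∈ Icc (ss i₀) (tt (i₀ + 1)) := ⟨le_refl _, (hst i₀ hi₀N).le⟩
  have hmtt : tt (i₀ + 1) ∈ Icc (ss i₀) (tt (i₀ + 1)) := ⟨(hst i₀ hi₀N).le, le_refl _⟩
  have hmaa : aa ∈ Icc (ss i₀) (tt (i₀ + 1)) := ⟨haa2.1.le, haa2.2⟩
  have hmbb : x₀ ∈ Icc (ss i₀) (tt (i₀ + 1)) := ⟨hx₀.1.le, hx₀.2⟩
  -- small c: the functional is negative
  have hsmall : ∃ c1 : ℝ, 0 < c1 ∧ Q - P c1 / c1 ^ 2 < 0 := by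
    have hba : 0 < x₀ - aa := by linarith
    have hden : 0 < δu ^ 2 * Real.exp H₀ * (x₀ - aa) :=
      mul_pos (mul_pos (pow_pos hδu0 2) (exp_pos _)) hba
    set M : ℝ := (Q + 1) / (δu ^ 2 * Real.exp H₀ * (x₀ - aa)) with hMdef
    have hM0 : 0 < M := div_pos (by linarith) hden
    obtain ⟨ρ, hρ0, hρ⟩ := hFt_super i₀ hi₀N M hM0
    set c1 : ℝ := min (ρ / B) 1 with hc1def
    have hc10 : 0 < c1 := lt_min (div_pos hρ0 hB0) one_pos
    have hc1B : c1 * B ≤ ρ := by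
      have h1 : c1 ≤ ρ / B := min_le_left _ _
      rwa [le_div_iff₀ hB0] at h1
    have hWlow : ∀ x ∈ Ioc aa x₀, Real.exp H₀ * (M * δu ^ 2 * c1 ^ 2)
        ≤ Real.exp (H x) * Ftilde i₀ x (c1 * u x) := by
      intro x hx
      have hxIcc : x ∈ Icc aa x₀ := ⟨hx.1.le, hx.2⟩
      have hxIoc := haIoc hxIcc
      have hx0T : x ∈ Icc (0:ℝ) T := hIoc_sub i₀ hi₀N hxIoc
      have h1 : δu ≤ |u x| := hulow x hxIcc
      have h2 : 0 < |c1 * u x| := by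
        rw [abs_mul, abs_of_pos hc10]
        exact mul_pos hc10 (lt_of_lt_of_le hδu0 h1)
      have h3 : |c1 * u x| ≤ ρ := by
        rw [abs_mul, abs_of_pos hc10]
        calc c1 * |u x| ≤ c1 * B := mul_le_mul_of_nonneg_left (hBu x hx0T) hc10.le
          _ ≤ ρ := hc1B
      have h4 := hρ x hxIoc (c1 * u x) h2 h3
      have h5 : M * δu ^ 2 * c1 ^ 2 ≤ M * (c1 * u x) ^ 2 := by
        have h6 : δu ^ 2 ≤ (u x) ^ 2 := by
          rw [← sq_abs (u x)]
          exact pow_le_pow_left₀ hδu0.le h1 2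
        calc M * δu ^ 2 * c1 ^ 2 = M * c1 ^ 2 * δu ^ 2 := by ring
          _ ≤ M * c1 ^ 2 * (u x) ^ 2 :=
              mul_le_mul_of_nonneg_left h6 (by positivity)
          _ = M * (c1 * u x) ^ 2 := by ring
      have h7 := hH₀le x hx0T
      calc Real.exp H₀ * (M * δu ^ 2 * c1 ^ 2)
          ≤ Real.exp (H x) * (M * δu ^ 2 * c1 ^ 2) :=
            mul_le_mul_of_nonneg_right h7
              (mul_nonneg (mul_nonneg hM0.le (sq_nonneg _)) (sq_nonneg _))
        _ ≤ Real.exp (H x) * Ftilde i₀ x (c1 * u x) :=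
            mul_le_mul_of_nonneg_left (le_trans h5 h4) (exp_pos _).le
    have hW1cont : ContinuousOn (fun x => Real.exp (H x) * Ftilde i₀ x (c1 * u x))
        (Icc (ss i₀) (tt (i₀ + 1))) := hAx.mul (hBx c1)
    have hW1int : ∀ p q, p ∈ Icc (ss i₀) (tt (i₀ + 1)) → q ∈ Icc (ss i₀) (tt (i₀ + 1)) →
        IntervalIntegrable (fun x => Real.exp (H x) * Ftilde i₀ x (c1 * u x)) volume p q :=
      fun p q hp hq => (hW1cont.mono (uIcc_sub hp hq)).intervalIntegrable
    have hGlow : Real.exp H₀ * (M * δu ^ 2 * c1 ^ 2) * (x₀ - aa) ≤ G i₀ c1 := by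
      have hsplit : G i₀ c1
          = ((∫ x in (ss i₀)..aa, Real.exp (H x) * Ftilde i₀ x (c1 * u x))
            + ∫ x in aa..x₀, Real.exp (H x) * Ftilde i₀ x (c1 * u x))
            + ∫ x in x₀..(tt (i₀ + 1)), Real.exp (H x) * Ftilde i₀ x (c1 * u x) := by
        simp only [hGdef]
        rw [intervalIntegral.integral_add_adjacent_intervals (hW1int _ _ hmss hmaa)
          (hW1int _ _ hmaa hmbb)]
        rw [intervalIntegral.integral_add_adjacent_intervals (hW1int _ _ hmss hmbb)
          (hW1int _ _ hmbb hmtt)]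
      have hp1 : 0 ≤ ∫ x in (ss i₀)..aa, Real.exp (H x) * Ftilde i₀ x (c1 * u x) :=
        int_nonneg _ _ haa2.1.le (fun x hx =>
          mul_nonneg (exp_pos _).le (hFt_nonneg i₀ hi₀N x ⟨hx.1, le_trans hx.2 haa2.2⟩ _))
      have hp3 : 0 ≤ ∫ x in x₀..(tt (i₀ + 1)), Real.exp (H x) * Ftilde i₀ x (c1 * u x) :=
        int_nonneg _ _ hx₀.2 (fun x hx =>
          mul_nonneg (exp_pos _).le (hFt_nonneg i₀ hi₀N x ⟨lt_trans hx₀.1 hx.1, hx.2⟩ _))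
      have hp2 : Real.exp H₀ * (M * δu ^ 2 * c1 ^ 2) * (x₀ - aa)
          ≤ ∫ x in aa..x₀, Real.exp (H x) * Ftilde i₀ x (c1 * u x) := by
        have hconst : (∫ _x in aa..x₀, Real.exp H₀ * (M * δu ^ 2 * c1 ^ 2))
            = Real.exp H₀ * (M * δu ^ 2 * c1 ^ 2) * (x₀ - aa) := by
          rw [intervalIntegral.integral_const, smul_eq_mul]
          ring
        rw [← hconst]
        apply int_mono aa x₀ haabb.le intervalIntegrable_const
          (hW1int aa x₀ hmaa hmbb)
        exact hWlow
      rw [hsplit]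
      linarith
    have hGsum : G i₀ c1 ≤ ∑ i ∈ Finset.range (N + 1), G i c1 :=
      Finset.single_le_sum (f := fun i => G i c1)
        (fun i hi => hGnonneg i (Finset.mem_range_succ_iff.mp hi) c1)
        (Finset.mem_range_succ_iff.mpr hi₀N)
    have hKsum : 0 ≤ ∑ i ∈ Finset.Icc 1 N, K i c1 :=
      Finset.sum_nonneg (fun i hi =>
        hKnonneg i (Finset.mem_Icc.mp hi).1 (Finset.mem_Icc.mp hi).2 c1)
    have h9 : Real.exp H₀ * (M * δu ^ 2 * c1 ^ 2) * (x₀ - aa) = (Q + 1) * c1 ^ 2 := by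
      rw [hMdef]
      field_simp
    have hPlow : (Q + 1) * c1 ^ 2 ≤ P c1 := by
      simp only [hPdef]
      rw [← h9]
      linarith
    refine ⟨c1, hc10, ?_⟩
    have h10 : Q + 1 ≤ P c1 / c1 ^ 2 := by
      rw [le_div_iff₀ (by positivity)]
      linarith
    linarith
  -- bounds on F and the primitive of Itilde
  have hFbound : ∀ i, i ≤ N → ∀ x ∈ Ioc (ss i) (tt (i + 1)), ∀ w : ℝ,
      Ftilde i x w ≤ A₁ * |w| ^ θ₁ := by
    intro i hi x hx w
    rw [hFt]
    have h1 := prim_bound (f := ftilde i x) w (A₁ * |w| ^ (θ₁ - 1)) ?_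
    · calc (∫ s in (0:ℝ)..w, ftilde i x s) ≤ |∫ s in (0:ℝ)..w, ftilde i x s| := le_abs_self _
        _ ≤ A₁ * |w| ^ (θ₁ - 1) * |w| := h1
        _ = A₁ * |w| ^ θ₁ := by rw [mul_assoc, rpow_absorb hθ₁]
    · intro s hs
      calc |ftilde i x s| ≤ A₁ * |s| ^ (θ₁ - 1) := hft_bound i hi x hx s
        _ ≤ A₁ * |w| ^ (θ₁ - 1) := mul_le_mul_of_nonneg_left
            (Real.rpow_le_rpow (abs_nonneg s) hs (by linarith)) hA₁.le
  have hkbound : ∀ i, 1 ≤ i → i ≤ N → ∀ w : ℝ,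
      (∫ s in (0:ℝ)..w, Itilde i s) ≤ a₂ * (|w| ^ θ₂ + |w|) := by
    intro i h1 h2 w
    have h3 := prim_bound (f := Itilde i) w (a₂ * (|w| ^ (θ₂ - 1) + 1)) ?_
    · calc (∫ s in (0:ℝ)..w, Itilde i s) ≤ |∫ s in (0:ℝ)..w, Itilde i s| := le_abs_self _
        _ ≤ a₂ * (|w| ^ (θ₂ - 1) + 1) * |w| := h3
        _ = a₂ * (|w| ^ (θ₂ - 1) * |w| + |w|) := by ring
        _ = a₂ * (|w| ^ θ₂ + |w|) := by rw [rpow_absorb hθ₂]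
    · intro s hs
      calc |Itilde i s| ≤ a₂ * (|s| ^ (θ₂ - 1) + 1) := hIt_bound i h1 h2 s
        _ ≤ a₂ * (|w| ^ (θ₂ - 1) + 1) := by
            apply mul_le_mul_of_nonneg_left _ ha₂.le
            have := Real.rpow_le_rpow (abs_nonneg s) hs (by linarith : (0:ℝ) ≤ θ₂ - 1)
            linarith
  have hGbig : ∀ i, i ≤ N → ∀ c : ℝ, 0 < c →
      G i c ≤ EM * A₁ * B ^ θ₁ * T * c ^ θ₁ := by
    intro i hi c hc
    simp only [hGdef]
    have hconst : ∀ x ∈ Ioc (ss i) (tt (i + 1)),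
        Real.exp (H x) * Ftilde i x (c * u x) ≤ EM * (A₁ * (c * B) ^ θ₁) := by
      intro x hx
      have hx0T := hIoc_sub i hi hx
      have h1 := hFbound i hi x hx (c * u x)
      have h2 : |c * u x| ^ θ₁ ≤ (c * B) ^ θ₁ := by
        apply Real.rpow_le_rpow (abs_nonneg _) _ (by linarith)
        rw [abs_mul, abs_of_pos hc]
        exact mul_le_mul_of_nonneg_left (hBu x hx0T) hc.le
      have h3 := hFt_nonneg i hi x hx (c * u x)
      exact mul_le_mul (hEMb x hx0T)
        (le_trans h1 (mul_le_mul_of_nonneg_left h2 hA₁.le)) h3 hEM0.le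
    calc (∫ x in (ss i)..(tt (i + 1)), Real.exp (H x) * Ftilde i x (c * u x))
        ≤ ∫ _x in (ss i)..(tt (i + 1)), EM * (A₁ * (c * B) ^ θ₁) :=
          int_mono _ _ (hst i hi).le (hGint i hi c) intervalIntegrable_const hconst
      _ = (tt (i + 1) - ss i) * (EM * (A₁ * (c * B) ^ θ₁)) := by
          rw [intervalIntegral.integral_const, smul_eq_mul]
      _ ≤ T * (EM * (A₁ * (c * B) ^ θ₁)) := by
          apply mul_le_mul_of_nonneg_right _ (by positivity)
          have := hss0 i hi
          have := httT (i + 1) (by omega) (by omega)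
          linarith
      _ = EM * A₁ * B ^ θ₁ * T * c ^ θ₁ := by
          rw [Real.mul_rpow hc.le hB0.le]
          ring
  have hKbig : ∀ i, 1 ≤ i → i ≤ N → ∀ c : ℝ, 0 < c →
      K i c ≤ EM * a₂ * (B ^ θ₂ * c ^ θ₂ + B * c) := by
    intro i h1 h2 c hc
    rw [hK_eq]
    have h3 := hkbound i h1 h2 (c * u (tt i))
    have h4 : |c * u (tt i)| ≤ c * B := by
      rw [abs_mul, abs_of_pos hc]
      exact mul_le_mul_of_nonneg_left (hBu _ (httmem i h1 h2)) hc.le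
    have h5 : |c * u (tt i)| ^ θ₂ ≤ c ^ θ₂ * B ^ θ₂ := by
      rw [← Real.mul_rpow hc.le hB0.le]
      exact Real.rpow_le_rpow (abs_nonneg _) h4 (by linarith)
    have h6 : (∫ s in (0:ℝ)..(c * u (tt i)), Itilde i s)
        ≤ a₂ * (c ^ θ₂ * B ^ θ₂ + c * B) := by
      apply le_trans h3
      apply mul_le_mul_of_nonneg_left _ ha₂.le
      linarith
    have h7 := hIt_nonneg i h1 h2 (c * u (tt i))
    calc Real.exp (H (tt i)) * ∫ s in (0:ℝ)..(c * u (tt i)), Itilde i s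
        ≤ EM * (a₂ * (c ^ θ₂ * B ^ θ₂ + c * B)) :=
          mul_le_mul (hEMb _ (httmem i h1 h2)) h6 h7 hEM0.le
      _ = EM * a₂ * (B ^ θ₂ * c ^ θ₂ + B * c) := by ring
  have hPbig : ∀ c : ℝ, 0 < c → P c ≤ ((N:ℝ) + 1) * (EM * A₁ * B ^ θ₁ * T * c ^ θ₁)
      + (N:ℝ) * (EM * a₂ * (B ^ θ₂ * c ^ θ₂ + B * c)) := by
    intro c hc
    simp only [hPdef]
    have s1 : (∑ i ∈ Finset.range (N + 1), G i c)
        ≤ ((N:ℝ) + 1) * (EM * A₁ * B ^ θ₁ * T * c ^ θ₁) := by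
      calc (∑ i ∈ Finset.range (N + 1), G i c)
          ≤ ∑ _i ∈ Finset.range (N + 1), EM * A₁ * B ^ θ₁ * T * c ^ θ₁ :=
            Finset.sum_le_sum (fun i hi => hGbig i (Finset.mem_range_succ_iff.mp hi) c hc)
        _ = ((N:ℝ) + 1) * (EM * A₁ * B ^ θ₁ * T * c ^ θ₁) := by
            rw [Finset.sum_const, Finset.card_range, nsmul_eq_mul]
            push_cast
            ring
    have s2 : (∑ i ∈ Finset.Icc 1 N, K i c)
        ≤ (N:ℝ) * (EM * a₂ * (B ^ θ₂ * c ^ θ₂ + B * c)) := by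
      calc (∑ i ∈ Finset.Icc 1 N, K i c)
          ≤ ∑ _i ∈ Finset.Icc 1 N, EM * a₂ * (B ^ θ₂ * c ^ θ₂ + B * c) :=
            Finset.sum_le_sum (fun i hi =>
              hKbig i (Finset.mem_Icc.mp hi).1 (Finset.mem_Icc.mp hi).2 c hc)
        _ = (N:ℝ) * (EM * a₂ * (B ^ θ₂ * c ^ θ₂ + B * c)) := by
            rw [Finset.sum_const, Nat.card_Icc, nsmul_eq_mul]
            norm_num
    linarith
  -- large c: the functional is positive
  have hbig : ∃ c2 : ℝ, 0 < c2 ∧ 0 < Q - P c2 / c2 ^ 2 := by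
    have t1 : Filter.Tendsto (fun c : ℝ => c ^ (θ₁ - 2)) Filter.atTop (nhds 0) := by
      have e : (fun c : ℝ => c ^ (θ₁ - 2)) = fun c : ℝ => c ^ (-(2 - θ₁)) := by
        funext c
        norm_num
      rw [e]
      exact tendsto_rpow_neg_atTop (by linarith)
    have t2 : Filter.Tendsto (fun c : ℝ => c ^ (θ₂ - 2)) Filter.atTop (nhds 0) := by
      have e : (fun c : ℝ => c ^ (θ₂ - 2)) = fun c : ℝ => c ^ (-(2 - θ₂)) := by
        funext c
        norm_num
      rw [e]
      exact tendsto_rpow_neg_atTop (by linarith)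
    have t3 : Filter.Tendsto (fun c : ℝ => c⁻¹) Filter.atTop (nhds 0) :=
      tendsto_inv_atTop_zero
    have htend : Filter.Tendsto (fun c : ℝ =>
        (((N:ℝ) + 1) * (EM * A₁ * B ^ θ₁ * T)) * c ^ (θ₁ - 2)
        + ((N:ℝ) * (EM * a₂ * B ^ θ₂)) * c ^ (θ₂ - 2)
        + ((N:ℝ) * (EM * a₂ * B)) * c⁻¹) Filter.atTop (nhds 0) := by
      have := ((t1.const_mul (((N:ℝ) + 1) * (EM * A₁ * B ^ θ₁ * T))).add
        (t2.const_mul ((N:ℝ) * (EM * a₂ * B ^ θ₂)))).add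
        (t3.const_mul ((N:ℝ) * (EM * a₂ * B)))
      simpa using this
    obtain ⟨c2, hc2X, hc21⟩ :=
      ((htend.eventually_lt_const hQpos).and (Filter.eventually_ge_atTop 1)).exists
    have hc20 : (0:ℝ) < c2 := lt_of_lt_of_le one_pos hc21
    refine ⟨c2, hc20, ?_⟩
    have e1 : c2 ^ (θ₁ - 2) * c2 ^ (2:ℕ) = c2 ^ θ₁ := by
      rw [← Real.rpow_natCast c2 2, ← Real.rpow_add hc20]
      norm_num
    have e2 : c2 ^ (θ₂ - 2) * c2 ^ (2:ℕ) = c2 ^ θ₂ := by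
      rw [← Real.rpow_natCast c2 2, ← Real.rpow_add hc20]
      norm_num
    have e3 : c2⁻¹ * c2 ^ (2:ℕ) = c2 := by
      field_simp
    have h8 := hPbig c2 hc20
    have h9 : P c2 / c2 ^ 2 < Q := by
      rw [div_lt_iff₀ (by positivity)]
      calc P c2 ≤ ((N:ℝ) + 1) * (EM * A₁ * B ^ θ₁ * T * c2 ^ θ₁)
            + (N:ℝ) * (EM * a₂ * (B ^ θ₂ * c2 ^ θ₂ + B * c2)) := h8
        _ = ((((N:ℝ) + 1) * (EM * A₁ * B ^ θ₁ * T)) * c2 ^ (θ₁ - 2)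
            + ((N:ℝ) * (EM * a₂ * B ^ θ₂)) * c2 ^ (θ₂ - 2)
            + ((N:ℝ) * (EM * a₂ * B)) * c2⁻¹) * c2 ^ (2:ℕ) := by
            rw [← e1, ← e2]
            field_simp
            ring
        _ < Q * c2 ^ (2:ℕ) := mul_lt_mul_of_pos_right hc2X (by positivity)
        _ = Q * c2 ^ 2 := by norm_num
    linarith
  obtain ⟨c1, hc10, hc1neg⟩ := hsmall
  obtain ⟨c2, hc20, hc2pos⟩ := hbig
  -- c1 < c2 by monotonicity
  have hc1ltc2 : c1 < c2 := by
    by_contra hcon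
    push_neg at hcon
    rcases eq_or_lt_of_le hcon with he | hl
    · rw [he] at hc2pos
      linarith
    · have := hψmono (mem_Ioi.mpr hc20) (mem_Ioi.mpr hc10) hl
      simp only [] at this
      linarith
  have hψcont : ContinuousOn (fun c => Q - P c / c ^ 2) (Icc c1 c2) := by
    apply ContinuousOn.sub continuousOn_const
    apply ContinuousOn.div hPcont.continuousOn ((continuous_pow 2).continuousOn)
    intro x hx
    have hx0 : 0 < x := lt_of_lt_of_le hc10 hx.1
    positivity
  obtain ⟨c₀, hc₀mem, hc₀eq⟩ := intermediate_value_Icc hc1ltc2.le hψcont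
    ⟨by show Q - P c1 / c1 ^ 2 ≤ 0; linarith, by show (0:ℝ) ≤ Q - P c2 / c2 ^ 2; linarith⟩
  have hc₀pos : 0 < c₀ := lt_of_lt_of_le hc10 hc₀mem.1
  have hc₀eq' : Q - P c₀ / c₀ ^ 2 = 0 := hc₀eq
  -- the two master sign facts
  have hΦval : ∀ c : ℝ, 0 < c → Φ c = c ^ 2 * (Q - P c / c ^ 2) := by
    intro c hc
    simp only [hΦdef]
    field_simp
    try ring
  have hΦabs : ∀ c : ℝ, c ≠ 0 → Φ c = Φ |c| := by
    intro c hc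
    rcases abs_choice c with h1 | h1
    · rw [h1]
    · rw [h1]
      exact (hΦeven c).symm
  have hneg : ∀ c : ℝ, 0 < |c| → |c| < c₀ → Φ c < 0 := by
    intro c h1 h2
    have hcne : c ≠ 0 := by
      intro h0
      rw [h0] at h1
      simp at h1
    rw [hΦabs c hcne, hΦval |c| h1]
    have hψ := hψmono (mem_Ioi.mpr h1) (mem_Ioi.mpr hc₀pos) h2
    simp only [] at hψ
    have : Q - P |c| / |c| ^ 2 < 0 := by linarith
    exact mul_neg_of_pos_of_neg (by positivity) this
  have hpos : ∀ c : ℝ, c₀ ≤ |c| → 0 ≤ Φ c := by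
    intro c h1
    have habs : 0 < |c| := lt_of_lt_of_le hc₀pos h1
    have hcne : c ≠ 0 := by
      intro h0
      rw [h0] at habs
      simp at habs
    rw [hΦabs c hcne, hΦval |c| habs]
    have hψge : 0 ≤ Q - P |c| / |c| ^ 2 := by
      rcases eq_or_lt_of_le h1 with he | hl
      · rw [← he]
        linarith
      · have := hψmono (mem_Ioi.mpr hc₀pos) (mem_Ioi.mpr habs) hl
        simp only [] at this
        linarith
    exact mul_nonneg (by positivity) hψge
  refine ⟨c₀, ⟨hc₀pos, ?_, ?_⟩, ?_⟩
  · intro c h1 h2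
    rw [hΦ c]
    exact hneg c h1 h2
  · intro c h1
    rw [hΦ c]
    exact hpos c h1
  · intro y hy
    obtain ⟨hy0, hy1, hy2⟩ := hy
    by_contra hne
    rcases lt_or_gt_of_ne hne with hl | hl
    · -- y < c₀
      have hc : 0 < (y + c₀) / 2 := by linarith
      have habs : |(y + c₀) / 2| = (y + c₀) / 2 := abs_of_pos hc
      have h2 := hy2 ((y + c₀) / 2) (by rw [habs]; linarith)
      rw [hΦ] at h2
      have h3 := hneg ((y + c₀) / 2) (by rw [habs]; linarith) (by rw [habs]; linarith)
      linarith
    · -- c₀ < y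
      have hc : 0 < (c₀ + y) / 2 := by linarith
      have habs : |(c₀ + y) / 2| = (c₀ + y) / 2 := abs_of_pos hc
      have h2 := hy1 ((c₀ + y) / 2) (by rw [habs]; linarith) (by rw [habs]; linarith)
      rw [hΦ] at h2
      have h3 := hpos ((c₀ + y) / 2) (by rw [habs]; linarith)
      linarith
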